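/- Suppose Y^n = (Y_1, …, Y_n) is i.i.d., S is independent of Y^n, J = f(Y^n, S) is a function of (Y^n, S), and for each t the Markov chain Z^{t−1} − (Y^{t−1}, J, S) − Y_t holds. Then H(J) ≥ Σ_{t=1}^n I(Y_t; Z^{t−1}, J, S). -/

import Mathlib

open scoped BigOperators Classical

noncomputable section

/-- A probability distribution on a finite sample space. -/
structure FinProb (Ω : Type*) [Fintype Ω] where
  p : Ω → ℝ
  nonneg : ∀ ω, 0 ≤ p ω
  sum_one : ∑ ω, p ω = 1

variable {Ω : Type*} [Fintype Ω]

/-- Probability of an event. -/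
def FinProb.pr (μ : FinProb Ω) (E : Set Ω) : ℝ :=
  ∑ ω, if ω ∈ E then μ.p ω else 0

/-- Distribution (pmf) of a random variable. -/
def dist {A : Type*} [Fintype A] (μ : FinProb Ω) (X : Ω → A) (a : A) : ℝ :=
  ∑ ω, if X ω = a then μ.p ω else 0

/-- Shannon entropy (in bits) of a finite-valued random variable. -/
def Hent {A : Type*} [Fintype A] (μ : FinProb Ω) (X : Ω → A) : ℝ :=
  ∑ a, -(dist μ X a * Real.logb 2 (dist μ X a))

/-- Conditional entropy H(X|Y) (in bits). -/
def Hcond {A B : Type*} [Fintype A] [Fintype B] (μ : FinProb Ω) (X : Ω → A) (Y : Ω → B) : ℝ :=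
  Hent μ (fun ω => (X ω, Y ω)) - Hent μ Y

/-- Mutual information I(X;Y) (in bits). -/
def MuI {A B : Type*} [Fintype A] [Fintype B] (μ : FinProb Ω) (X : Ω → A) (Y : Ω → B) : ℝ :=
  Hent μ X + Hent μ Y - Hent μ (fun ω => (X ω, Y ω))

/-- Independence of two random variables. -/
def IndepRV {A B : Type*} [Fintype A] [Fintype B] (μ : FinProb Ω) (X : Ω → A) (Y : Ω → B) : Prop :=
  ∀ a b, dist μ (fun ω => (X ω, Y ω)) (a, b) = dist μ X a * dist μ Y b

/-- A random variable is uniformly distributed. -/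
def Uniform {A : Type*} [Fintype A] (μ : FinProb Ω) (X : Ω → A) : Prop :=
  ∀ a, dist μ X a = 1 / (Fintype.card A : ℝ)

/-- Markov chain X − Y − Z: X and Z conditionally independent given Y. -/
def Markov {A B C : Type*} [Fintype A] [Fintype B] [Fintype C]
    (μ : FinProb Ω) (X : Ω → A) (Y : Ω → B) (Z : Ω → C) : Prop :=
  ∀ a b c, dist μ (fun ω => (X ω, Y ω, Z ω)) (a, b, c) * dist μ Y b =
    dist μ (fun ω => (X ω, Y ω)) (a, b) * dist μ (fun ω => (Y ω, Z ω)) (b, c)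

/-- Markov chain Z − X − Y − U of length four. -/
def Markov4 {A B C D : Type*} [Fintype A] [Fintype B] [Fintype C] [Fintype D]
    (μ : FinProb Ω) (Z : Ω → A) (X : Ω → B) (Y : Ω → C) (U : Ω → D) : Prop :=
  Markov μ Z X (fun ω => (Y ω, U ω)) ∧ Markov μ (fun ω => (Z ω, X ω)) Y U

/-- The process `Y` is i.i.d. -/
def IID {n : ℕ} {A : Type*} [Fintype A] (μ : FinProb Ω) (Y : Fin n → Ω → A) : Prop :=
  (∀ y : Fin n → A, dist μ (fun ω t => Y t ω) y = ∏ t, dist μ (Y t) (y t)) ∧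
  (∀ t t' a, dist μ (Y t) a = dist μ (Y t') a)

/-- The prefix (Y_1, …, Y_{t-1}) of a process, as a single random variable. -/
def prefixRV {n : ℕ} {A : Type*} (Y : Fin n → Ω → A) (t : Fin n) : Ω → (Fin t.1 → A) :=
  fun ω s => Y (Fin.castLE t.isLt.le s) ω

end

namespace TRC
open Real Finset
variable {Ω : Type*} [Fintype Ω] (μ : FinProb Ω)
variable {A B C D : Type*} [Fintype A] [Fintype B] [Fintype C] [Fintype D]


lemma dist_nn (X : Ω → A) (a : A) : 0 ≤ dist μ X a :=
  Finset.sum_nonneg fun ω _ => by split <;> simp [μ.nonneg ω]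

lemma sum_dist (X : Ω → A) : ∑ a, dist μ X a = 1 := by
  unfold _root_.dist
  rw [Finset.sum_comm]
  simp only [Finset.sum_ite_eq, Finset.mem_univ, if_true]
  exact μ.sum_one

lemma dist_le_one (X : Ω → A) (a : A) : dist μ X a ≤ 1 := by
  rw [← μ.sum_one]
  exact Finset.sum_le_sum fun ω _ => by split <;> simp [μ.nonneg ω]

/-- workhorse: expectation form of sums over values. -/
lemma sum_dist_mul (X : Ω → A) (F : A → ℝ) :
    ∑ a, dist μ X a * F a = ∑ ω, μ.p ω * F (X ω) := by
  unfold _root_.dist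
  simp only [Finset.sum_mul]
  rw [Finset.sum_comm]
  congr 1; funext ω
  rw [Finset.sum_congr rfl (fun a _ => ite_mul (X ω = a) (μ.p ω) 0 (F a))]
  simp [Finset.sum_ite_eq]

lemma dist_comp_le (X : Ω → A) (g : A → B) (a : A) :
    dist μ X a ≤ dist μ (fun ω => g (X ω)) (g a) := by
  refine Finset.sum_le_sum fun ω _ => ?_
  by_cases h : X ω = a
  · simp [h]
  · simp only [h, if_false]
    split <;> simp [μ.nonneg ω]

lemma dist_comp_inj (X : Ω → A) {g : A → B} (hg : Function.Injective g) (a : A) :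
    dist μ (fun ω => g (X ω)) (g a) = dist μ X a := by
  unfold _root_.dist; simp [hg.eq_iff]

lemma hent_comp_inj (X : Ω → A) {g : A → B} (hg : Function.Injective g) :
    Hent μ (fun ω => g (X ω)) = Hent μ X := by
  unfold Hent
  rw [← Finset.sum_subset (Finset.subset_univ (Finset.univ.image g))]
  · rw [Finset.sum_image (fun a _ a' _ h => hg h)]
    refine Finset.sum_congr rfl fun a _ => ?_
    rw [dist_comp_inj μ X hg]
  · intro b _ hb
    have h0 : dist μ (fun ω => g (X ω)) b = 0 := by
      unfold _root_.dist
      refine Finset.sum_eq_zero fun ω _ => ?_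
      have : g (X ω) ≠ b := fun h => hb (Finset.mem_image.2 ⟨X ω, Finset.mem_univ _, h⟩)
      simp [this]
    simp [h0]

/-- Gibbs' inequality. -/
lemma gibbs {ι : Type*} (s : Finset ι) (p q : ι → ℝ)
    (hp : ∀ i ∈ s, 0 ≤ p i) (hq : ∀ i ∈ s, 0 ≤ q i)
    (hac : ∀ i ∈ s, p i ≠ 0 → q i ≠ 0)
    (hsum : ∑ i ∈ s, q i ≤ ∑ i ∈ s, p i) :
    ∑ i ∈ s, p i * Real.logb 2 (q i) ≤ ∑ i ∈ s, p i * Real.logb 2 (p i) := by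
  classical
  set t := s.filter (fun i => p i ≠ 0) with ht
  have hts : t ⊆ s := Finset.filter_subset _ _
  have hzero : ∀ i ∈ s, i ∉ t → (p i * Real.logb 2 (q i) = 0 ∧ p i * Real.logb 2 (p i) = 0) := by
    intro i hi hit
    have : p i = 0 := by
      by_contra h
      exact hit (Finset.mem_filter.2 ⟨hi, h⟩)
    simp [this]
  have e1 : ∑ i ∈ s, p i * Real.logb 2 (q i) = ∑ i ∈ t, p i * Real.logb 2 (q i) :=
    (Finset.sum_subset hts (fun i hi hit => (hzero i hi hit).1)).symm
  have e2 : ∑ i ∈ s, p i * Real.logb 2 (p i) = ∑ i ∈ t, p i * Real.logb 2 (p i) :=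
    (Finset.sum_subset hts (fun i hi hit => (hzero i hi hit).2)).symm
  rw [e1, e2]
  have hppos : ∀ i ∈ t, 0 < p i := fun i hi =>
    lt_of_le_of_ne (hp i (hts hi)) (Ne.symm (Finset.mem_filter.1 hi).2)
  have hqpos : ∀ i ∈ t, 0 < q i := fun i hi =>
    lt_of_le_of_ne (hq i (hts hi))
      (Ne.symm (hac i (hts hi) (Finset.mem_filter.1 hi).2))
  have key : ∑ i ∈ t, p i * (Real.log (q i) - Real.log (p i)) ≤ 0 := by
    have h1 : ∀ i ∈ t, p i * (Real.log (q i) - Real.log (p i)) ≤ q i - p i := by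
      intro i hi
      have hp' := hppos i hi
      have hq' := hqpos i hi
      have : Real.log (q i) - Real.log (p i) = Real.log (q i / p i) := by
        rw [Real.log_div hq'.ne' hp'.ne']
      rw [this]
      have hlog := Real.log_le_sub_one_of_pos (div_pos hq' hp')
      calc p i * Real.log (q i / p i) ≤ p i * (q i / p i - 1) := by
            exact mul_le_mul_of_nonneg_left hlog hp'.le
        _ = q i - p i := by field_simp
    calc ∑ i ∈ t, p i * (Real.log (q i) - Real.log (p i))
        ≤ ∑ i ∈ t, (q i - p i) := Finset.sum_le_sum h1
      _ = ∑ i ∈ t, q i - ∑ i ∈ t, p i := Finset.sum_sub_distrib _ _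
      _ ≤ ∑ i ∈ s, q i - ∑ i ∈ s, p i := by
          have hq2 : ∑ i ∈ t, q i ≤ ∑ i ∈ s, q i :=
            Finset.sum_le_sum_of_subset_of_nonneg hts (fun i hi _ => hq i hi)
          have hp2 : ∑ i ∈ t, p i = ∑ i ∈ s, p i :=
            Finset.sum_subset hts (fun i hi hit => by
              by_contra h
              exact hit (Finset.mem_filter.2 ⟨hi, h⟩))
          linarith
      _ ≤ 0 := by linarith
  have hlog2 : (0:ℝ) < Real.log 2 := Real.log_pos one_lt_two
  have : ∑ i ∈ t, p i * Real.logb 2 (q i) - ∑ i ∈ t, p i * Real.logb 2 (p i)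
      = (∑ i ∈ t, p i * (Real.log (q i) - Real.log (p i))) / Real.log 2 := by
    rw [← Finset.sum_sub_distrib, Finset.sum_div]
    refine Finset.sum_congr rfl fun i _ => ?_
    unfold Real.logb
    field_simp
  nlinarith [div_nonpos_of_nonpos_of_nonneg key hlog2.le]


lemma hent_eq (X : Ω → A) :
    Hent μ X = -∑ a, dist μ X a * Real.logb 2 (dist μ X a) := by
  unfold Hent; rw [← Finset.sum_neg_distrib]

lemma sum_mul_logb_self (X : Ω → A) :
    ∑ a, dist μ X a * Real.logb 2 (dist μ X a) = -Hent μ X := by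
  rw [hent_eq]; ring

lemma dist_mono (X' : Ω → B) (X : Ω → A) (v : B) (u : A)
    (h : ∀ ω, X' ω = v → X ω = u) : dist μ X' v ≤ dist μ X u := by
  refine Finset.sum_le_sum fun ω _ => ?_
  by_cases hv : X' ω = v
  · simp [hv, h ω hv]
  · simp only [hv, if_false]; split <;> simp [μ.nonneg ω]

lemma sum_mul_logb_eq (X : Ω → A) (g : A → B) (Xg : Ω → B)
    (hXg : ∀ ω, Xg ω = g (X ω)) :
    ∑ a, dist μ X a * Real.logb 2 (dist μ Xg (g a)) = -Hent μ Xg := by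
  have hX : Xg = fun ω => g (X ω) := funext hXg
  rw [sum_dist_mul, ← sum_mul_logb_self μ Xg, sum_dist_mul]
  rw [hX]

lemma hent_nonneg (X : Ω → A) : 0 ≤ Hent μ X := by
  refine Finset.sum_nonneg fun a _ => ?_
  have h1 := dist_nn μ X a
  have h2 : Real.logb 2 (dist μ X a) ≤ 0 :=
    Real.logb_nonpos one_lt_two h1 (dist_le_one μ X a)
  nlinarith

lemma dist_fst (U : Ω → A) (V : Ω → B) (u : A) :
    ∑ b, dist μ (fun ω => (U ω, V ω)) (u, b) = dist μ U u := by
  unfold _root_.dist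
  rw [Finset.sum_comm]
  refine Finset.sum_congr rfl fun ω _ => ?_
  by_cases h : U ω = u
  · simp [Prod.ext_iff, h, ite_and, Finset.sum_ite_eq]
  · simp [Prod.ext_iff, h]

lemma dist_snd (U : Ω → A) (V : Ω → B) (v : B) :
    ∑ a, dist μ (fun ω => (U ω, V ω)) (a, v) = dist μ V v := by
  unfold _root_.dist
  rw [Finset.sum_comm]
  refine Finset.sum_congr rfl fun ω _ => ?_
  by_cases h : V ω = v
  · simp [Prod.ext_iff, h, ite_and, Finset.sum_ite_eq]
  · simp [Prod.ext_iff, h, ite_and]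

/-- H(Y) ≤ H(X,Y) -/
lemma hent_snd_le_pair (X : Ω → A) (V : Ω → B) :
    Hent μ V ≤ Hent μ (fun ω => (X ω, V ω)) := by
  set T := fun ω => (X ω, V ω) with hT
  have key : ∀ x : A × B,
      dist μ T x * Real.logb 2 (dist μ T x) ≤
      dist μ T x * Real.logb 2 (dist μ V x.2) := by
    intro x
    rcases eq_or_ne (dist μ T x) 0 with h | h
    · simp [h]
    · have hpos : 0 < dist μ T x := lt_of_le_of_ne (dist_nn μ T x) (Ne.symm h)
      have hle : dist μ T x ≤ dist μ V x.2 :=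
        dist_mono μ T V x x.2 (fun ω hω => by rw [hT] at hω; rw [← hω])
      exact mul_le_mul_of_nonneg_left
        (Real.logb_le_logb_of_le one_lt_two hpos hle) hpos.le
  have e : ∑ x : A × B, dist μ T x * Real.logb 2 (dist μ V x.2) = -Hent μ V := by
    have := sum_mul_logb_eq μ T (fun x => x.2) V (fun ω => rfl)
    exact this
  have h2 : ∑ x : A × B, dist μ T x * Real.logb 2 (dist μ T x) ≤ -Hent μ V := by
    rw [← e]; exact Finset.sum_le_sum fun x _ => key x
  rw [sum_mul_logb_self] at h2
  linarith

/-- subadditivity H(X,V) ≤ H(X) + H(V) -/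
lemma hent_pair_le (X : Ω → A) (V : Ω → B) :
    Hent μ (fun ω => (X ω, V ω)) ≤ Hent μ X + Hent μ V := by
  set T := fun ω => (X ω, V ω) with hT
  set q : A × B → ℝ := fun x => dist μ X x.1 * dist μ V x.2 with hq
  have hgibbs := gibbs Finset.univ (fun x => dist μ T x) q
    (fun x _ => dist_nn μ T x)
    (fun x _ => mul_nonneg (dist_nn μ X x.1) (dist_nn μ V x.2))
    (fun x _ hx => by
      have hpos : 0 < dist μ T x := lt_of_le_of_ne (dist_nn μ T x) (Ne.symm hx)
      have h1 : dist μ T x ≤ dist μ X x.1 :=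
        dist_mono μ T X x x.1 (fun ω hω => by rw [← hω])
      have h2 : dist μ T x ≤ dist μ V x.2 :=
        dist_mono μ T V x x.2 (fun ω hω => by rw [← hω])
      exact ne_of_gt (mul_pos (lt_of_lt_of_le hpos h1) (lt_of_lt_of_le hpos h2)))
    (by
      rw [Fintype.sum_prod_type]
      have : ∀ a : A, ∑ b, q (a, b) = dist μ X a := by
        intro a
        rw [show (∑ b, q (a,b)) = dist μ X a * ∑ b, dist μ V b from by
          rw [Finset.mul_sum]]
        rw [sum_dist, mul_one]
      rw [Finset.sum_congr rfl fun a _ => this a, sum_dist, sum_dist μ T])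
  -- now rewrite LHS of gibbs
  have hsplit : ∑ x : A × B, dist μ T x * Real.logb 2 (q x)
      = -Hent μ X + -Hent μ V := by
    have e : ∀ x : A × B, dist μ T x * Real.logb 2 (q x)
        = dist μ T x * Real.logb 2 (dist μ X x.1)
          + dist μ T x * Real.logb 2 (dist μ V x.2) := by
      intro x
      rcases eq_or_ne (dist μ T x) 0 with h | h
      · simp [h]
      · have hpos : 0 < dist μ T x := lt_of_le_of_ne (dist_nn μ T x) (Ne.symm h)
        have h1 : (0:ℝ) < dist μ X x.1 := lt_of_lt_of_le hpos
          (dist_mono μ T X x x.1 (fun ω hω => by rw [← hω]))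
        have h2 : (0:ℝ) < dist μ V x.2 := lt_of_lt_of_le hpos
          (dist_mono μ T V x x.2 (fun ω hω => by rw [← hω]))
        rw [hq]
        rw [Real.logb_mul h1.ne' h2.ne', mul_add]
    rw [Finset.sum_congr rfl fun x _ => e x, Finset.sum_add_distrib]
    rw [sum_mul_logb_eq μ T (fun x => x.1) X (fun ω => rfl),
        sum_mul_logb_eq μ T (fun x => x.2) V (fun ω => rfl)]
  rw [hsplit, sum_mul_logb_self] at hgibbs
  linarith

/-- submodularity: H(X,W,Y) + H(W) ≤ H(X,W) + H(W,Y) -/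
lemma hent_submodular (X : Ω → A) (W : Ω → B) (V : Ω → C) :
    Hent μ (fun ω => (X ω, W ω, V ω)) + Hent μ W ≤
      Hent μ (fun ω => (X ω, W ω)) + Hent μ (fun ω => (W ω, V ω)) := by
  set T := fun ω => (X ω, W ω, V ω) with hT
  set XW := fun ω => (X ω, W ω) with hXW
  set WV := fun ω => (W ω, V ω) with hWV
  set q : A × B × C → ℝ :=
    fun x => dist μ XW (x.1, x.2.1) * dist μ WV x.2 / dist μ W x.2.1 with hq
  have hd1 : ∀ x : A × B × C, dist μ T x ≤ dist μ XW (x.1, x.2.1) :=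
    fun x => dist_mono μ T XW x (x.1, x.2.1)
      (fun ω hω => by rw [← hω])
  have hd2 : ∀ x : A × B × C, dist μ T x ≤ dist μ WV x.2 :=
    fun x => dist_mono μ T WV x x.2 (fun ω hω => by rw [← hω])
  have hd3 : ∀ x : A × B × C, dist μ T x ≤ dist μ W x.2.1 :=
    fun x => dist_mono μ T W x x.2.1 (fun ω hω => by rw [← hω])
  have hgibbs := gibbs Finset.univ (fun x => dist μ T x) q
    (fun x _ => dist_nn μ T x)
    (fun x _ => div_nonneg
      (mul_nonneg (dist_nn μ XW _) (dist_nn μ WV _)) (dist_nn μ W _))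
    (fun x _ hx => by
      have hpos : 0 < dist μ T x := lt_of_le_of_ne (dist_nn μ T x) (Ne.symm hx)
      have h1 := lt_of_lt_of_le hpos (hd1 x)
      have h2 := lt_of_lt_of_le hpos (hd2 x)
      have h3 := lt_of_lt_of_le hpos (hd3 x)
      exact ne_of_gt (div_pos (mul_pos h1 h2) h3))
    (by
      calc ∑ x : A × B × C, q x
          = ∑ a, ∑ w, ∑ v, q (a, w, v) := by
            rw [Fintype.sum_prod_type]
            exact Finset.sum_congr rfl fun a _ => by rw [Fintype.sum_prod_type]
        _ = ∑ a, ∑ w, dist μ XW (a, w) * dist μ W w / dist μ W w := by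
            refine Finset.sum_congr rfl fun a _ => Finset.sum_congr rfl fun w _ => ?_
            rw [show (∑ v, q (a, w, v))
                = (∑ v, dist μ XW (a,w) * dist μ WV (w,v)) / dist μ W w from by
              rw [Finset.sum_div]]
            rw [← Finset.mul_sum, dist_fst]
        _ = ∑ w, dist μ W w * dist μ W w / dist μ W w := by
            rw [Finset.sum_comm]
            refine Finset.sum_congr rfl fun w _ => ?_
            rw [show (∑ a, dist μ XW (a, w) * dist μ W w / dist μ W w)
                = (∑ a, dist μ XW (a, w)) * dist μ W w / dist μ W w from by
              rw [Finset.sum_mul, Finset.sum_div]]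
            rw [hXW, dist_snd]
        _ ≤ ∑ w, dist μ W w := by
            refine Finset.sum_le_sum fun w _ => ?_
            rcases eq_or_ne (dist μ W w) 0 with h | h
            · simp [h]
            · rw [mul_div_assoc, div_self h, mul_one]
        _ = 1 := sum_dist μ W
        _ = ∑ x : A × B × C, dist μ T x := (sum_dist μ T).symm)
  have hsplit : ∑ x : A × B × C, dist μ T x * Real.logb 2 (q x)
      = -Hent μ XW + -Hent μ WV - -Hent μ W := by
    have e : ∀ x : A × B × C, dist μ T x * Real.logb 2 (q x)
        = dist μ T x * Real.logb 2 (dist μ XW (x.1, x.2.1))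
          + dist μ T x * Real.logb 2 (dist μ WV x.2)
          - dist μ T x * Real.logb 2 (dist μ W x.2.1) := by
      intro x
      rcases eq_or_ne (dist μ T x) 0 with h | h
      · simp [h]
      · have hpos : 0 < dist μ T x := lt_of_le_of_ne (dist_nn μ T x) (Ne.symm h)
        have h1 := lt_of_lt_of_le hpos (hd1 x)
        have h2 := lt_of_lt_of_le hpos (hd2 x)
        have h3 := lt_of_lt_of_le hpos (hd3 x)
        rw [hq]
        rw [Real.logb_div (mul_ne_zero h1.ne' h2.ne') h3.ne',
            Real.logb_mul h1.ne' h2.ne']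
        ring
    rw [Finset.sum_congr rfl fun x _ => e x]
    rw [Finset.sum_sub_distrib, Finset.sum_add_distrib]
    rw [sum_mul_logb_eq μ T (fun x => (x.1, x.2.1)) XW (fun ω => rfl),
        sum_mul_logb_eq μ T (fun x => x.2) WV (fun ω => rfl),
        sum_mul_logb_eq μ T (fun x => x.2.1) W (fun ω => rfl)]
  rw [hsplit, sum_mul_logb_self] at hgibbs
  linarith

/-- Markov chain entropy identity -/
lemma markov_hent (X : Ω → A) (W : Ω → B) (V : Ω → C)
    (h : ∀ a b c, dist μ (fun ω => (X ω, W ω, V ω)) (a, b, c) * dist μ W b =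
      dist μ (fun ω => (X ω, W ω)) (a, b) * dist μ (fun ω => (W ω, V ω)) (b, c)) :
    Hent μ (fun ω => (X ω, W ω, V ω)) + Hent μ W =
      Hent μ (fun ω => (X ω, W ω)) + Hent μ (fun ω => (W ω, V ω)) := by
  set T := fun ω => (X ω, W ω, V ω) with hT
  set XW := fun ω => (X ω, W ω) with hXW
  set WV := fun ω => (W ω, V ω) with hWV
  have hd1 : ∀ x : A × B × C, dist μ T x ≤ dist μ XW (x.1, x.2.1) :=
    fun x => dist_mono μ T XW x (x.1, x.2.1) (fun ω hω => by rw [← hω])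
  have hd2 : ∀ x : A × B × C, dist μ T x ≤ dist μ WV x.2 :=
    fun x => dist_mono μ T WV x x.2 (fun ω hω => by rw [← hω])
  have hd3 : ∀ x : A × B × C, dist μ T x ≤ dist μ W x.2.1 :=
    fun x => dist_mono μ T W x x.2.1 (fun ω hω => by rw [← hω])
  have key : ∀ x : A × B × C,
      dist μ T x * Real.logb 2 (dist μ T x)
        + dist μ T x * Real.logb 2 (dist μ W x.2.1)
      = dist μ T x * Real.logb 2 (dist μ XW (x.1, x.2.1))
        + dist μ T x * Real.logb 2 (dist μ WV x.2) := by
    intro x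
    rcases eq_or_ne (dist μ T x) 0 with h0 | h0
    · simp [h0]
    · have hpos : 0 < dist μ T x := lt_of_le_of_ne (dist_nn μ T x) (Ne.symm h0)
      have h1 := lt_of_lt_of_le hpos (hd1 x)
      have h2 := lt_of_lt_of_le hpos (hd2 x)
      have h3 := lt_of_lt_of_le hpos (hd3 x)
      have hx := h x.1 x.2.1 x.2.2
      have hlog : Real.logb 2 (dist μ T x * dist μ W x.2.1)
          = Real.logb 2 (dist μ XW (x.1, x.2.1) * dist μ WV x.2) := by
        rw [show ((x.1, x.2.1, x.2.2) : A × B × C) = x from rfl] at hx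
        rw [hx]
      rw [Real.logb_mul h0 h3.ne', Real.logb_mul h1.ne' h2.ne'] at hlog
      nlinarith [hlog]
  have hsum : ∑ x : A × B × C,
      (dist μ T x * Real.logb 2 (dist μ T x)
        + dist μ T x * Real.logb 2 (dist μ W x.2.1))
      = ∑ x : A × B × C,
      (dist μ T x * Real.logb 2 (dist μ XW (x.1, x.2.1))
        + dist μ T x * Real.logb 2 (dist μ WV x.2)) :=
    Finset.sum_congr rfl fun x _ => key x
  rw [Finset.sum_add_distrib, Finset.sum_add_distrib] at hsum
  rw [sum_mul_logb_self, sum_mul_logb_eq μ T (fun x => (x.1, x.2.1)) XW (fun ω => rfl),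
      sum_mul_logb_eq μ T (fun x => x.2) WV (fun ω => rfl),
      sum_mul_logb_eq μ T (fun x => x.2.1) W (fun ω => rfl)] at hsum
  linarith

lemma hent_swap (X : Ω → A) (V : Ω → B) :
    Hent μ (fun ω => (X ω, V ω)) = Hent μ (fun ω => (V ω, X ω)) := by
  have : (fun ω => (X ω, V ω)) = fun ω => Prod.swap (V ω, X ω) := rfl
  rw [this, hent_comp_inj μ _ Prod.swap_injective]

/-- data processing for a deterministic function: I(X; g(B)) ≤ I(X; B) -/
lemma muI_comp_le (X : Ω → A) (Bv : Ω → B) (g : B → C) :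
    MuI μ X (fun ω => g (Bv ω)) ≤ MuI μ X Bv := by
  -- H(B) = H(B, gB)
  have e1 : Hent μ Bv = Hent μ (fun ω => (Bv ω, g (Bv ω))) :=
    (hent_comp_inj μ Bv (g := fun b => (b, g b))
      (fun b b' h => by simp only [Prod.mk.injEq] at h; exact h.1)).symm
  -- H(X,B) = H(X, gB, B)
  have e2 : Hent μ (fun ω => (X ω, Bv ω)) =
      Hent μ (fun ω => (X ω, g (Bv ω), Bv ω)) :=
    (hent_comp_inj μ (fun ω => (X ω, Bv ω))
      (g := fun x : A × B => (x.1, g x.2, x.2))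
      (fun x x' h => by
        simp only [Prod.mk.injEq] at h
        exact Prod.ext h.1 h.2.2)).symm
  -- H(gB, B) = H(B, gB)
  have e3 : Hent μ (fun ω => (g (Bv ω), Bv ω)) =
      Hent μ (fun ω => (Bv ω, g (Bv ω))) := hent_swap μ _ _
  have sub := hent_submodular μ X (fun ω => g (Bv ω)) Bv
  unfold MuI
  rw [e1, e2]
  rw [e3] at sub
  linarith

/-- Markov X - W - V implies I(V; (X,W)) = I(V; W) -/
lemma muI_markov (X : Ω → A) (W : Ω → B) (V : Ω → C)
    (h : ∀ a b c, dist μ (fun ω => (X ω, W ω, V ω)) (a, b, c) * dist μ W b =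
      dist μ (fun ω => (X ω, W ω)) (a, b) * dist μ (fun ω => (W ω, V ω)) (b, c)) :
    MuI μ V (fun ω => (X ω, W ω)) = MuI μ V W := by
  have hm := markov_hent μ X W V h
  unfold MuI
  have e1 : Hent μ (fun ω => (V ω, X ω, W ω)) =
      Hent μ (fun ω => (X ω, W ω, V ω)) :=
    hent_comp_inj μ (fun ω => (X ω, W ω, V ω))
      (g := fun x : A × B × C => (x.2.2, x.1, x.2.1))
      (fun x x' hx => by
        simp only [Prod.mk.injEq] at hx
        exact Prod.ext hx.2.1 (Prod.ext hx.2.2 hx.1))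
  have e2 : Hent μ (fun ω => (V ω, W ω)) = Hent μ (fun ω => (W ω, V ω)) :=
    hent_swap μ _ _
  rw [e1, e2]
  linarith

/-- independence entropy: H(X,V) = H(X) + H(V) -/
lemma hent_indep (X : Ω → A) (V : Ω → B)
    (h : ∀ a b, dist μ (fun ω => (X ω, V ω)) (a, b) = dist μ X a * dist μ V b) :
    Hent μ (fun ω => (X ω, V ω)) = Hent μ X + Hent μ V := by
  have key : ∀ u v : ℝ, 0 ≤ u → 0 ≤ v →
      -(u * v * Real.logb 2 (u * v)) =
        u * -(v * Real.logb 2 v) + v * -(u * Real.logb 2 u) := by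
    intro u v hu hv
    rcases eq_or_lt_of_le hu with h1 | h1
    · simp [← h1]
    rcases eq_or_lt_of_le hv with h2 | h2
    · simp [← h2]
    rw [Real.logb_mul h1.ne' h2.ne']
    ring
  unfold Hent
  rw [Fintype.sum_prod_type]
  have e : ∀ a, ∑ b, -(dist μ (fun ω => (X ω, V ω)) (a, b) *
      Real.logb 2 (dist μ (fun ω => (X ω, V ω)) (a, b)))
      = dist μ X a * ∑ b, -(dist μ V b * Real.logb 2 (dist μ V b))
        + (∑ b, dist μ V b * -(dist μ X a * Real.logb 2 (dist μ X a))) := by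
    intro a
    rw [Finset.mul_sum, ← Finset.sum_add_distrib]
    refine Finset.sum_congr rfl fun b _ => ?_
    rw [h a b, key _ _ (dist_nn μ X a) (dist_nn μ V b)]
  rw [Finset.sum_congr rfl fun a _ => e a, Finset.sum_add_distrib]
  have f1 : ∑ a, dist μ X a * ∑ b, -(dist μ V b * Real.logb 2 (dist μ V b))
      = ∑ b : B, -(dist μ V b * Real.logb 2 (dist μ V b)) := by
    rw [← Finset.sum_mul, sum_dist, one_mul]
  have f2 : ∑ a, ∑ b, dist μ V b * -(dist μ X a * Real.logb 2 (dist μ X a))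
      = ∑ a : A, -(dist μ X a * Real.logb 2 (dist μ X a)) := by
    refine Finset.sum_congr rfl fun a _ => ?_
    rw [← Finset.sum_mul, sum_dist, one_mul]
  rw [f1, f2]
  ring


lemma phi_mul (u v : ℝ) (hu : 0 ≤ u) (hv : 0 ≤ v) :
    -(u * v * Real.logb 2 (u * v)) =
      u * -(v * Real.logb 2 v) + v * -(u * Real.logb 2 u) := by
  rcases eq_or_lt_of_le hu with h1 | h1
  · simp [← h1]
  rcases eq_or_lt_of_le hv with h2 | h2
  · simp [← h2]
  rw [Real.logb_mul h1.ne' h2.ne']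
  ring

lemma sum_prod_one {n : ℕ} (q : Fin n → A → ℝ) (h1 : ∀ t, ∑ a, q t a = 1) :
    ∑ y : Fin n → A, ∏ t, q t (y t) = 1 := by
  induction n with
  | zero =>
    haveI : Unique (Fin 0 → A) := ⟨⟨fun i => i.elim0⟩, fun f => funext fun i => i.elim0⟩
    rw [Fintype.sum_unique]
    simp
  | succ n ih =>
    rw [← Equiv.sum_comp (Fin.consEquiv (fun _ : Fin (n+1) => A))
      (fun y => ∏ t, q t (y t)), Fintype.sum_prod_type]
    have e : ∀ (a : A) (z : Fin n → A),
        ∏ t, q t ((Fin.consEquiv (fun _ : Fin (n+1) => A)) (a, z) t)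
          = q 0 a * ∏ t : Fin n, q t.succ (z t) := by
      intro a z
      rw [Fin.prod_univ_succ]
      simp [Fin.consEquiv]
    calc ∑ a, ∑ z : Fin n → A, ∏ t, q t ((Fin.consEquiv (fun _ : Fin (n+1) => A)) (a, z) t)
        = ∑ a, ∑ z : Fin n → A, q 0 a * ∏ t : Fin n, q t.succ (z t) := by
          exact Finset.sum_congr rfl fun a _ => Finset.sum_congr rfl fun z _ => e a z
      _ = ∑ a, q 0 a * ∑ z : Fin n → A, ∏ t : Fin n, q t.succ (z t) := by
          exact Finset.sum_congr rfl fun a _ => (Finset.mul_sum _ _ _).symm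
      _ = 1 := by
          rw [ih (fun t => q t.succ) (fun t => h1 t.succ)]
          simp [h1 0]

lemma prod_hent {n : ℕ} (q : Fin n → A → ℝ) (h0 : ∀ t a, 0 ≤ q t a)
    (h1 : ∀ t, ∑ a, q t a = 1) :
    ∑ y : Fin n → A, -((∏ t, q t (y t)) * Real.logb 2 (∏ t, q t (y t)))
      = ∑ t, ∑ a, -(q t a * Real.logb 2 (q t a)) := by
  induction n with
  | zero =>
    haveI : Unique (Fin 0 → A) := ⟨⟨fun i => i.elim0⟩, fun f => funext fun i => i.elim0⟩
    rw [Fintype.sum_unique]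
    simp
  | succ n ih =>
    rw [← Equiv.sum_comp (Fin.consEquiv (fun _ : Fin (n+1) => A))
      (fun y => -((∏ t, q t (y t)) * Real.logb 2 (∏ t, q t (y t)))),
      Fintype.sum_prod_type]
    have hprodnn : ∀ z : Fin n → A, 0 ≤ ∏ t : Fin n, q t.succ (z t) :=
      fun z => Finset.prod_nonneg fun t _ => h0 t.succ (z t)
    have e : ∀ (a : A) (z : Fin n → A),
        -((∏ t, q t ((Fin.consEquiv (fun _ : Fin (n+1) => A)) (a, z) t)) *
            Real.logb 2 (∏ t, q t ((Fin.consEquiv (fun _ : Fin (n+1) => A)) (a, z) t)))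
        = q 0 a * -((∏ t : Fin n, q t.succ (z t)) *
              Real.logb 2 (∏ t : Fin n, q t.succ (z t)))
          + (∏ t : Fin n, q t.succ (z t)) * -(q 0 a * Real.logb 2 (q 0 a)) := by
      intro a z
      have ep : ∏ t, q t ((Fin.consEquiv (fun _ : Fin (n+1) => A)) (a, z) t)
          = q 0 a * ∏ t : Fin n, q t.succ (z t) := by
        rw [Fin.prod_univ_succ]
        simp [Fin.consEquiv]
      rw [ep, phi_mul _ _ (h0 0 a) (hprodnn z)]
    calc ∑ a, ∑ z : Fin n → A, -((∏ t, q t ((Fin.consEquiv (fun _ : Fin (n+1) => A)) (a, z) t)) *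
            Real.logb 2 (∏ t, q t ((Fin.consEquiv (fun _ : Fin (n+1) => A)) (a, z) t)))
        = ∑ a, (q 0 a * ∑ z : Fin n → A,
              -((∏ t : Fin n, q t.succ (z t)) * Real.logb 2 (∏ t : Fin n, q t.succ (z t)))
            + (∑ z : Fin n → A, ∏ t : Fin n, q t.succ (z t)) * -(q 0 a * Real.logb 2 (q 0 a))) := by
          refine Finset.sum_congr rfl fun a _ => ?_
          rw [Finset.sum_congr rfl fun z _ => e a z, Finset.sum_add_distrib,
            ← Finset.mul_sum, ← Finset.sum_mul]
      _ = ∑ a, (q 0 a * ∑ t : Fin n, ∑ b, -(q t.succ b * Real.logb 2 (q t.succ b))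
            + -(q 0 a * Real.logb 2 (q 0 a))) := by
          refine Finset.sum_congr rfl fun a _ => ?_
          rw [ih (fun t => q t.succ) (fun t a => h0 t.succ a) (fun t => h1 t.succ),
            sum_prod_one (fun t => q t.succ) (fun t => h1 t.succ), one_mul]
      _ = ∑ t, ∑ a, -(q t a * Real.logb 2 (q t a)) := by
          rw [Finset.sum_add_distrib, ← Finset.sum_mul, h1 0, one_mul,
            Fin.sum_univ_succ]
          ring

end TRC

/-- Converse bound for the template rate: H(J) ≥ Σ_t I(Y_t; Z^{t−1}, J, S). -/
theorem template_rate_converse {Ω 𝒴 𝒵 𝒮 𝒥 : Type*} [Fintype Ω] [Fintype 𝒴]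
    [Fintype 𝒵] [Fintype 𝒮] [Fintype 𝒥]
    (μ : FinProb Ω) (n : ℕ) (Y : Fin n → Ω → 𝒴) (Z : Fin n → Ω → 𝒵)
    (S : Ω → 𝒮) (J : Ω → 𝒥) (f : (Fin n → 𝒴) → 𝒮 → 𝒥)
    (hiid : IID μ Y)
    (hS : IndepRV μ S (fun ω t => Y t ω))
    (hJ : ∀ ω, J ω = f (fun t => Y t ω) (S ω))
    (hMar : ∀ t : Fin n, Markov μ (prefixRV Z t)
      (fun ω => (prefixRV Y t ω, J ω, S ω)) (Y t)) :
    Hent μ J ≥ ∑ t, MuI μ (Y t) (fun ω => (prefixRV Z t ω, J ω, S ω)) := by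
  classical
  open TRC in
  have hYvec : Hent μ (fun ω t => Y t ω) = ∑ t, Hent μ (Y t) := by
    unfold Hent
    calc ∑ y : Fin n → 𝒴, -(dist μ (fun ω t => Y t ω) y *
            Real.logb 2 (dist μ (fun ω t => Y t ω) y))
        = ∑ y : Fin n → 𝒴, -((∏ t, dist μ (Y t) (y t)) *
            Real.logb 2 (∏ t, dist μ (Y t) (y t))) := by
          exact Finset.sum_congr rfl fun y _ => by rw [hiid.1 y]
      _ = ∑ t, ∑ a, -(dist μ (Y t) a * Real.logb 2 (dist μ (Y t) a)) :=
          prod_hent (fun t => dist μ (Y t)) (fun t a => dist_nn μ (Y t) a)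
            (fun t => sum_dist μ (Y t))
  set a : ℕ → ℝ := fun k => if h : k ≤ n then
      Hent μ (fun ω => ((fun s : Fin k => Y (Fin.castLE h s) ω), J ω, S ω)) else 0
    with ha
  have haz : ∀ (k : ℕ) (h : k ≤ n), a k =
      Hent μ (fun ω => ((fun s : Fin k => Y (Fin.castLE h s) ω), J ω, S ω)) := by
    intro k h
    rw [ha]
    simp only [dif_pos h]
  have hA : ∀ t : Fin n, MuI μ (Y t) (fun ω => (prefixRV Z t ω, J ω, S ω)) ≤
      MuI μ (Y t) (fun ω => (prefixRV Y t ω, J ω, S ω)) := by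
    intro t
    have h1 : MuI μ (Y t) (fun ω => (prefixRV Z t ω, J ω, S ω)) ≤
        MuI μ (Y t) (fun ω => (prefixRV Z t ω, prefixRV Y t ω, J ω, S ω)) :=
      muI_comp_le μ (Y t)
        (fun ω => (prefixRV Z t ω, prefixRV Y t ω, J ω, S ω))
        (fun x => (x.1, x.2.2))
    have h2 : MuI μ (Y t) (fun ω => (prefixRV Z t ω, prefixRV Y t ω, J ω, S ω)) =
        MuI μ (Y t) (fun ω => (prefixRV Y t ω, J ω, S ω)) :=
      muI_markov μ (prefixRV Z t) (fun ω => (prefixRV Y t ω, J ω, S ω)) (Y t)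
        (hMar t)
    linarith
  have hB : ∀ t : Fin n, MuI μ (Y t) (fun ω => (prefixRV Y t ω, J ω, S ω))
      = Hent μ (Y t) + (a t.1 - a (t.1 + 1)) := by
    intro t
    have hv : Hent μ (fun ω => (prefixRV Y t ω, J ω, S ω)) = a t.1 := by
      rw [haz t.1 t.isLt.le]
      rfl
    have hp : Hent μ (fun ω => (Y t ω, prefixRV Y t ω, J ω, S ω)) = a (t.1 + 1) := by
      rw [haz (t.1 + 1) t.isLt]
      have efun : (fun ω => ((fun s : Fin (t.1 + 1) => Y (Fin.castLE t.isLt s) ω), J ω, S ω))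
          = fun ω => ((fun x : 𝒴 × (Fin t.1 → 𝒴) × 𝒥 × 𝒮 => (Fin.snoc (α := fun _ => 𝒴) x.2.1 x.1, x.2.2))
              ((Y t ω, prefixRV Y t ω, J ω, S ω))) := by
        funext ω
        refine Prod.ext ?_ rfl
        show (fun s : Fin (t.1 + 1) => Y (Fin.castLE t.isLt s) ω)
          = Fin.snoc (α := fun _ => 𝒴) (prefixRV Y t ω) (Y t ω)
        funext s
        refine Fin.lastCases ?_ ?_ s
        · rw [Fin.snoc_last]
          exact congrArg (fun u => Y u ω) (Fin.ext (by simp))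
        · intro i
          rw [Fin.snoc_castSucc]
          show Y (Fin.castLE t.isLt i.castSucc) ω = Y (Fin.castLE t.isLt.le i) ω
          exact congrArg (fun u => Y u ω) (Fin.ext rfl)
      rw [efun]
      refine Eq.symm (hent_comp_inj μ (fun ω => (Y t ω, prefixRV Y t ω, J ω, S ω))
        (g := fun x : 𝒴 × (Fin t.1 → 𝒴) × 𝒥 × 𝒮 => (Fin.snoc (α := fun _ => 𝒴) x.2.1 x.1, x.2.2))
        (fun x x' h => by
          simp only [Prod.mk.injEq] at h
          obtain ⟨h1, h2⟩ := h
          have hfst : x.1 = x'.1 := by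
            have := congrFun h1 (Fin.last _)
            simpa [Fin.snoc_last] using this
          have hsnd : x.2.1 = x'.2.1 := funext fun i => by
            have := congrFun h1 (Fin.castSucc i)
            simpa [Fin.snoc_castSucc] using this
          exact Prod.ext hfst (Prod.ext hsnd h2)))
    unfold MuI
    rw [hv, hp]
    ring
  have hC : ∑ t : Fin n, (a t.1 - a (t.1 + 1)) = a 0 - a n := by
    rw [Fin.sum_univ_eq_sum_range (fun k => a k - a (k + 1)) n]
    exact Finset.sum_range_sub' a n
  have hD : a 0 = Hent μ (fun ω => (J ω, S ω)) := by
    rw [haz 0 (Nat.zero_le n)]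
    have efun : (fun ω => ((fun s : Fin 0 => Y (Fin.castLE (Nat.zero_le n) s) ω), J ω, S ω))
        = fun ω => ((fun x : 𝒥 × 𝒮 => ((fun s : Fin 0 => s.elim0), x.1, x.2))
            ((J ω, S ω))) := by
      funext ω
      simp only
      exact Prod.ext (funext fun s => s.elim0) rfl
    rw [efun]
    exact hent_comp_inj μ (fun ω => (J ω, S ω))
      (g := fun x : 𝒥 × 𝒮 => ((fun s : Fin 0 => s.elim0 : Fin 0 → 𝒴), x.1, x.2))
      (fun x x' h => by
        simp only [Prod.mk.injEq] at h
        exact Prod.ext h.2.1 h.2.2)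
  have hE : a n = Hent μ (fun ω => ((fun t => Y t ω), S ω)) := by
    rw [haz n le_rfl]
    have efun : (fun ω => ((fun s : Fin n => Y (Fin.castLE le_rfl s) ω), J ω, S ω))
        = fun ω => ((fun x : (Fin n → 𝒴) × 𝒮 => (x.1, f x.1 x.2, x.2))
            (((fun t => Y t ω), S ω))) := by
      funext ω
      simp only
      refine Prod.ext ?_ (Prod.ext ?_ rfl)
      · funext s
        exact congrArg (fun u => Y u ω) (Fin.ext rfl)
      · exact hJ ω
    rw [efun]
    exact hent_comp_inj μ (fun ω => ((fun t => Y t ω), S ω))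
      (g := fun x : (Fin n → 𝒴) × 𝒮 => (x.1, f x.1 x.2, x.2))
      (fun x x' h => by
        simp only [Prod.mk.injEq] at h
        exact Prod.ext h.1 h.2.2)
  have hF : Hent μ (fun ω => ((fun t => Y t ω), S ω)) =
      Hent μ (fun ω t => Y t ω) + Hent μ S := by
    rw [hent_swap μ (fun ω t => Y t ω) S]
    rw [hent_indep μ S (fun ω t => Y t ω) hS]
    ring
  have hH : Hent μ (fun ω => (J ω, S ω)) ≤ Hent μ J + Hent μ S :=
    hent_pair_le μ J S
  have hsum : ∑ t, MuI μ (Y t) (fun ω => (prefixRV Z t ω, J ω, S ω)) ≤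
      ∑ t : Fin n, (Hent μ (Y t) + (a t.1 - a (t.1 + 1))) := by
    refine Finset.sum_le_sum fun t _ => ?_
    have h1 := hA t
    have h2 := hB t
    linarith
  rw [Finset.sum_add_distrib, hC] at hsum
  rw [hD, hE, hF, hYvec] at hsum
  linarith
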